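/- Let p be a probability measure on Z absolutely continuous with respect to p̂ with density g := dp/dp̂ and KL(p‖p̂) < ∞, let β > 0 and b ∈ ℝ^d, and let λ* be a maximizer of D_{β,b} over ℝ^d. Then ∫ |g(z) − exp(⟨λ*, φ(z)⟩ − Λ_{λ*})| dp̂(z) ≤ √2·√(KL(p‖p̂)) + (2/β)·‖∫ φ dp − b‖₂. -/

import Mathlib

open MeasureTheory

/-- Euclidean inner product on `ℝ^d`. -/
noncomputable def dotd {d : ℕ} (lam v : Fin d → ℝ) : ℝ := ∑ i, lam i * v i

/-- The log-normalizer `Λ_λ = log ∫ exp⟨λ, φ(z)⟩ dp̂(z)`. -/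
noncomputable def LamZ {Z : Type*} [MeasurableSpace Z] (phat : Measure Z)
    {d : ℕ} (φ : Z → Fin d → ℝ) (lam : Fin d → ℝ) : ℝ :=
  Real.log (∫ z, Real.exp (dotd lam (φ z)) ∂phat)

/-- Kullback–Leibler divergence `KL(p‖q) = ∫ log (dp/dq) dp`. -/
noncomputable def KLm {Z : Type*} [MeasurableSpace Z] (p q : Measure Z) : ℝ :=
  ∫ z, Real.log ((p.rnDeriv q z).toReal) ∂p

/-- The `ℓ₂²`-regularized dual objective `D_{β,b}(λ) = ⟨λ,b⟩ − Λ_λ − (β²/4)‖λ‖₂²`. -/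
noncomputable def Dreg {Z : Type*} [MeasurableSpace Z] (phat : Measure Z)
    {d : ℕ} (φ : Z → Fin d → ℝ) (β : ℝ) (b lam : Fin d → ℝ) : ℝ :=
  dotd lam b - LamZ phat φ lam - (β ^ 2 / 4) * ∑ i, (lam i) ^ 2



lemma log_ge_one_sub_inv {t : ℝ} (ht : 0 < t) : 1 - 1/t ≤ Real.log t := by
  have h := Real.log_le_sub_one_of_pos (show (0:ℝ) < 1/t by positivity)
  rw [Real.log_div one_ne_zero ht.ne', Real.log_one] at h
  linarith

noncomputable def G1 (t : ℝ) : ℝ := (t+1) * Real.log t - 2*t + 2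
noncomputable def Gf (t : ℝ) : ℝ := 2*(t * Real.log t - t + 1)*(t+2) - 3*(t-1)^2

lemma contOn_G1 {s : Set ℝ} (hs : ∀ x ∈ s, x ≠ 0) : ContinuousOn G1 s := by
  have hlog : ContinuousOn Real.log s := Real.continuousOn_log.mono hs
  exact (((continuousOn_id.add continuousOn_const).mul hlog).sub
    (continuousOn_const.mul continuousOn_id)).add continuousOn_const

lemma contOn_Gf {s : Set ℝ} (hs : ∀ x ∈ s, x ≠ 0) : ContinuousOn Gf s := by
  have hlog : ContinuousOn Real.log s := Real.continuousOn_log.mono hs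
  exact ((continuousOn_const.mul (((continuousOn_id.mul hlog).sub
    continuousOn_id).add continuousOn_const)).mul
    (continuousOn_id.add continuousOn_const)).sub
    (continuousOn_const.mul (((continuousOn_id.sub continuousOn_const)).pow 2))

lemma hasDerivG1 {t : ℝ} (ht : 0 < t) :
    HasDerivAt G1 (Real.log t + 1/t - 1) t := by
  have h1 : HasDerivAt (fun s : ℝ => s + 1) 1 t := by
    simpa using (hasDerivAt_id t).add_const 1
  have h2 := h1.mul (Real.hasDerivAt_log ht.ne')
  have h3 : HasDerivAt (fun s : ℝ => 2*s) 2 t := by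
    simpa using (hasDerivAt_id t).const_mul 2
  have h4 := (h2.sub h3).add_const 2
  have : G1 = fun s : ℝ => (s+1) * Real.log s - 2*s + 2 := rfl
  rw [this]
  refine h4.congr_deriv ?_
  have h5 : t * t⁻¹ = 1 := mul_inv_cancel₀ ht.ne'
  rw [one_div]
  linarith

lemma hasDerivGf {t : ℝ} (ht : 0 < t) :
    HasDerivAt Gf (4 * G1 t) t := by
  have hid : HasDerivAt (fun s : ℝ => s) 1 t := hasDerivAt_id t
  have hl : HasDerivAt (fun s : ℝ => s * Real.log s - s + 1)
      (1 * Real.log t + t * t⁻¹ - 1) t :=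
    ((hid.mul (Real.hasDerivAt_log ht.ne')).sub hid).add_const 1
  have hl2 := hl.const_mul 2
  have hr : HasDerivAt (fun s : ℝ => s + 2) 1 t := by
    simpa using hid.add_const 2
  have hq : HasDerivAt (fun s : ℝ => (s-1)^2) (2*(t-1)) t := by
    have h : HasDerivAt (fun s : ℝ => s - 1) 1 t := by simpa using hid.sub_const 1
    have := h.pow 2
    refine this.congr_deriv ?_
    ring
  have h5 := ((hl2.mul hr).sub (hq.const_mul 3))
  have : Gf = fun s : ℝ => 2*(s * Real.log s - s + 1)*(s+2) - 3*(s-1)^2 := rfl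
  rw [this]
  refine h5.congr_deriv ?_
  unfold G1
  have : t * t⁻¹ = 1 := mul_inv_cancel₀ ht.ne'
  field_simp
  ring

lemma G1_nonneg {t : ℝ} (ht : 1 ≤ t) : 0 ≤ G1 t := by
  have key : MonotoneOn G1 (Set.Ici 1) := by
    apply monotoneOn_of_hasDerivWithinAt_nonneg (f' := fun x => Real.log x + 1/x - 1)
      (convex_Ici 1) (contOn_G1 (by intro x hx; simp at hx; positivity))
    · intro x hx
      rw [interior_Ici] at hx ⊢
      exact (hasDerivG1 (by simp at hx; linarith)).hasDerivWithinAt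
    · intro x hx
      rw [interior_Ici] at hx
      have h0 : (0:ℝ) < x := by simp at hx; linarith
      have := log_ge_one_sub_inv h0
      linarith
  have := key (by simp : (1:ℝ) ∈ Set.Ici 1) ht ht
  simpa [G1] using this

lemma G1_nonpos {t : ℝ} (ht0 : 0 < t) (ht : t ≤ 1) : G1 t ≤ 0 := by
  have key : MonotoneOn G1 (Set.Ioc 0 1) := by
    apply monotoneOn_of_hasDerivWithinAt_nonneg (f' := fun x => Real.log x + 1/x - 1)
      (convex_Ioc 0 1) (contOn_G1 (by intro x hx; exact hx.1.ne'))
    · intro x hx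
      rw [interior_Ioc] at hx ⊢
      exact (hasDerivG1 hx.1).hasDerivWithinAt
    · intro x hx
      rw [interior_Ioc] at hx
      have := log_ge_one_sub_inv hx.1
      linarith
  have := key (by constructor <;> linarith : t ∈ Set.Ioc 0 1) (by simp) ht
  simpa [G1] using this

lemma Gf_nonneg {t : ℝ} (ht : 0 ≤ t) : 0 ≤ Gf t := by
  rcases eq_or_lt_of_le ht with h | h
  · simp [Gf, ← h]; norm_num
  rcases le_or_gt 1 t with h1 | h1
  · have key : MonotoneOn Gf (Set.Ici 1) := by
      apply monotoneOn_of_hasDerivWithinAt_nonneg (f' := fun x => 4 * G1 x)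
        (convex_Ici 1) (contOn_Gf (by intro x hx; simp at hx; positivity))
      · intro x hx
        rw [interior_Ici] at hx ⊢
        exact (hasDerivGf (by simp at hx; linarith)).hasDerivWithinAt
      · intro x hx
        rw [interior_Ici] at hx
        have := G1_nonneg (le_of_lt (by simpa using hx))
        linarith
    have := key (by simp : (1:ℝ) ∈ Set.Ici 1) h1 h1
    simpa [Gf] using this
  · have key : AntitoneOn Gf (Set.Ioc 0 1) := by
      apply antitoneOn_of_hasDerivWithinAt_nonpos (f' := fun x => 4 * G1 x)
        (convex_Ioc 0 1) (contOn_Gf (by intro x hx; exact hx.1.ne'))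
      · intro x hx
        rw [interior_Ioc] at hx ⊢
        exact (hasDerivGf hx.1).hasDerivWithinAt
      · intro x hx
        rw [interior_Ioc] at hx
        have := G1_nonpos hx.1 hx.2.le
        linarith
    have := key (by constructor <;> linarith : t ∈ Set.Ioc 0 1) (by simp) h1.le
    simpa [Gf] using this

lemma pointwise_pinsker {x y : ℝ} (hx : 0 ≤ x) (hy : 0 < y) :
    3*(x-y)^2 ≤ 2*(x*(Real.log x - Real.log y) - x + y)*(x+2*y) := by
  rcases eq_or_lt_of_le hx with h|h
  · rw [← h]
    simp only [zero_mul, zero_sub, sub_zero, neg_sub, zero_add]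
    nlinarith
  · have hG := Gf_nonneg (le_of_lt (div_pos h hy))
    rw [Gf, Real.log_div h.ne' hy.ne'] at hG
    set A := Real.log x with hA
    set B := Real.log y with hB
    have hx' : x = (x/y) * y := (div_mul_cancel₀ x hy.ne').symm
    rw [hx']
    nlinarith [mul_nonneg hG (sq_nonneg y)]

lemma sqrt_add_le' {x y : ℝ} (hx : 0 ≤ x) (hy : 0 ≤ y) :
    Real.sqrt (x + y) ≤ Real.sqrt x + Real.sqrt y := by
  have h : x + y ≤ (Real.sqrt x + Real.sqrt y)^2 := by
    nlinarith [Real.sq_sqrt hx, Real.sq_sqrt hy, Real.sqrt_nonneg x, Real.sqrt_nonneg y]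
  calc Real.sqrt (x+y) ≤ Real.sqrt ((Real.sqrt x + Real.sqrt y)^2) := Real.sqrt_le_sqrt h
  _ = _ := Real.sqrt_sq (by positivity)

lemma pinsker {Z : Type*} [MeasurableSpace Z] (μ : Measure Z) [IsProbabilityMeasure μ]
    (g h : Z → ℝ) (hgm : Measurable g) (hhm : Measurable h)
    (hg0 : ∀ z, 0 ≤ g z) (hh0 : ∀ z, 0 < h z)
    (hgi : Integrable g μ) (hhi : Integrable h μ)
    (hg1 : ∫ z, g z ∂μ = 1) (hh1 : ∫ z, h z ∂μ = 1)
    (hKi : Integrable (fun z => g z * (Real.log (g z) - Real.log (h z))) μ) :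
    ∫ z, |g z - h z| ∂μ ≤
      Real.sqrt (2 * ∫ z, g z * (Real.log (g z) - Real.log (h z)) ∂μ) := by
  set K := ∫ z, g z * (Real.log (g z) - Real.log (h z)) ∂μ with hK
  set F : Z → ℝ := fun z => g z * (Real.log (g z) - Real.log (h z)) - g z + h z with hF
  have hw0 : ∀ z, 0 < g z + 2 * h z := fun z => by linarith [hg0 z, hh0 z]
  have hkey : ∀ z, 3 * (g z - h z)^2 ≤ 2 * F z * (g z + 2 * h z) :=
    fun z => pointwise_pinsker (hg0 z) (hh0 z)
  have hF0 : ∀ z, 0 ≤ F z := by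
    intro z
    have := hkey z
    have h3 := sq_nonneg (g z - h z)
    nlinarith [hw0 z]
  have hFi : Integrable F μ := (hKi.sub hgi).add hhi
  clear_value F
  have hA : Integrable (fun z => g z * (Real.log (g z) - Real.log (h z)) - g z) μ :=
    hKi.sub hgi
  have hFint : ∫ z, F z ∂μ = K := by
    rw [hF]
    rw [integral_add hA hhi, integral_sub hKi hgi, hg1, hh1]
    ring
  set a : Z → ℝ := fun z => |g z - h z| / Real.sqrt (g z + 2 * h z) with ha
  set b : Z → ℝ := fun z => Real.sqrt (g z + 2 * h z) with hb
  have ham : Measurable a := ((hgm.sub hhm).abs).div ((hgm.add (hhm.const_mul 2)).sqrt)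
  have hbm : Measurable b := (hgm.add (hhm.const_mul 2)).sqrt
  have hab : ∀ z, a z * b z = |g z - h z| := by
    intro z
    rw [ha, hb]
    exact div_mul_cancel₀ _ (Real.sqrt_ne_zero'.mpr (hw0 z))
  have hasq : ∀ z, a z ^ 2 = (g z - h z)^2 / (g z + 2*h z) := by
    intro z
    rw [ha, div_pow, sq_abs, Real.sq_sqrt (hw0 z).le]
  have hasqle : ∀ z, a z ^ 2 ≤ 2/3 * F z := by
    intro z
    rw [hasq z, div_le_iff₀ (hw0 z)]
    have h9 := hkey z
    linarith
  have hai2 : Integrable (fun z => a z ^ 2) μ := by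
    apply Integrable.mono' (hFi.const_mul (2/3)) ((ham.pow_const 2).aestronglyMeasurable)
    filter_upwards with z
    rw [Real.norm_of_nonneg (sq_nonneg _)]
    exact hasqle z
  have hbsq : (fun z => b z ^ 2) = fun z => g z + 2 * h z :=
    funext fun z => Real.sq_sqrt (hw0 z).le
  have hbi2 : Integrable (fun z => b z ^ 2) μ := by
    rw [hbsq]; exact hgi.add (hhi.const_mul 2)
  have hma : MemLp a (ENNReal.ofReal 2) μ := by
    rw [show ENNReal.ofReal (2:ℝ) = 2 from by norm_num]
    exact (memLp_two_iff_integrable_sq ham.aestronglyMeasurable).mpr hai2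
  have hmb : MemLp b (ENNReal.ofReal 2) μ := by
    rw [show ENNReal.ofReal (2:ℝ) = 2 from by norm_num]
    exact (memLp_two_iff_integrable_sq hbm.aestronglyMeasurable).mpr hbi2
  have hpq : Real.HolderConjugate 2 2 := Real.HolderConjugate.two_two
  have hold := integral_mul_le_Lp_mul_Lq_of_nonneg hpq
    (ae_of_all _ fun z => div_nonneg (abs_nonneg _) (Real.sqrt_nonneg _))
    (ae_of_all _ fun z => Real.sqrt_nonneg _) hma hmb
  simp only [Real.rpow_two] at hold
  have hIa0 : 0 ≤ ∫ z, a z ^ 2 ∂μ := integral_nonneg fun z => sq_nonneg _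
  have hIale : ∫ z, a z ^ 2 ∂μ ≤ 2/3 * K := by
    calc ∫ z, a z ^ 2 ∂μ ≤ ∫ z, 2/3 * F z ∂μ :=
          integral_mono hai2 (hFi.const_mul _) hasqle
    _ = 2/3 * K := by rw [integral_const_mul, hFint]
  have hKnn : 0 ≤ K := by linarith
  have hIb : ∫ z, b z ^ 2 ∂μ = 3 := by
    rw [hbsq, integral_add hgi (hhi.const_mul 2), integral_const_mul, hg1, hh1]
    norm_num
  calc ∫ z, |g z - h z| ∂μ = ∫ z, a z * b z ∂μ :=
        (integral_congr_ae (ae_of_all _ fun z => (hab z).symm))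
  _ ≤ (∫ z, a z ^ 2 ∂μ) ^ (1/(2:ℝ)) * (∫ z, b z ^ 2 ∂μ) ^ (1/(2:ℝ)) := hold
  _ = Real.sqrt (∫ z, a z ^ 2 ∂μ) * Real.sqrt (∫ z, b z ^ 2 ∂μ) := by
        rw [← Real.sqrt_eq_rpow, ← Real.sqrt_eq_rpow]
  _ ≤ Real.sqrt (2/3 * K) * Real.sqrt 3 := by
        rw [hIb]
        exact mul_le_mul_of_nonneg_right (Real.sqrt_le_sqrt hIale) (Real.sqrt_nonneg _)
  _ = Real.sqrt (2 * K) := by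
        rw [← Real.sqrt_mul (mul_nonneg (by norm_num) hKnn)]
        congr 1
        ring

lemma xlogx_ge {x : ℝ} (hx : 0 ≤ x) : x - 1 ≤ x * Real.log x := by
  rcases eq_or_lt_of_le hx with h|h
  · rw [← h]; norm_num
  · have h2 := mul_le_mul_of_nonneg_left (log_ge_one_sub_inv h) h.le
    have h3 : x * (1 - 1/x) = x - 1 := by field_simp
    linarith

theorem stmt10 {Z : Type*} [MeasurableSpace Z] (phat : Measure Z) [IsProbabilityMeasure phat]
    {d : ℕ} (φ : Z → Fin d → ℝ) (hφm : Measurable φ)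
    (C : ℝ) (hφb : ∀ z i, |φ z i| ≤ C)
    (p : Measure Z) [IsProbabilityMeasure p] (hac : p ≪ phat)
    (g : Z → ℝ) (hg : g = fun z => (p.rnDeriv phat z).toReal)
    (hKLfin : Integrable (fun z => Real.log ((p.rnDeriv phat z).toReal)) p)
    (β : ℝ) (hβ : 0 < β) (b : Fin d → ℝ) (lamStar : Fin d → ℝ)
    (hmax : ∀ lam, Dreg phat φ β b lam ≤ Dreg phat φ β b lamStar) :
    ∫ z, |g z - Real.exp (dotd lamStar (φ z) - LamZ phat φ lamStar)| ∂phat ≤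
      Real.sqrt 2 * Real.sqrt (KLm p phat) +
        (2 / β) * Real.sqrt (∑ i, ((∫ z, φ z i ∂p) - b i) ^ 2) := by
  subst hg
  set g : Z → ℝ := fun z => (p.rnDeriv phat z).toReal with hgdef
  -- basic measurability / bounds
  have hφim : ∀ i, Measurable fun z => φ z i := fun i => (measurable_pi_apply i).comp hφm
  have hdotm : Measurable fun z => dotd lamStar (φ z) := by
    unfold dotd
    exact Finset.measurable_sum _ fun i _ => (hφim i).const_mul _
  set M := ∑ i : Fin d, |lamStar i| * C with hM
  have hdotb : ∀ z, |dotd lamStar (φ z)| ≤ M := by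
    intro z
    calc |∑ i, lamStar i * φ z i| ≤ ∑ i, |lamStar i * φ z i| :=
          Finset.abs_sum_le_sum_abs _ _
    _ ≤ M := Finset.sum_le_sum fun i _ => by
          rw [abs_mul]; exact mul_le_mul_of_nonneg_left (hφb z i) (abs_nonneg _)
  have hexpm : Measurable fun z => Real.exp (dotd lamStar (φ z)) := hdotm.exp
  have hexpi : Integrable (fun z => Real.exp (dotd lamStar (φ z))) phat := by
    apply Integrable.mono' (integrable_const (Real.exp M)) hexpm.aestronglyMeasurable
    filter_upwards with z
    rw [Real.norm_of_nonneg (Real.exp_pos _).le]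
    exact Real.exp_le_exp.mpr (le_of_abs_le (hdotb z))
  set I := ∫ z, Real.exp (dotd lamStar (φ z)) ∂phat with hI
  have hIpos : 0 < I := by
    have hle : Real.exp (-M) ≤ I := by
      rw [hI, show Real.exp (-M) = ∫ _z, Real.exp (-M) ∂phat by simp]
      exact integral_mono (integrable_const _) hexpi
        (fun z => Real.exp_le_exp.mpr (neg_le_of_abs_le (hdotb z)))
    linarith [Real.exp_pos (-M)]
  have hLam : LamZ phat φ lamStar = Real.log I := rfl
  have hexpLam : Real.exp (LamZ phat φ lamStar) = I := by rw [hLam, Real.exp_log hIpos]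
  set h : Z → ℝ := fun z => Real.exp (dotd lamStar (φ z) - LamZ phat φ lamStar) with hhdef
  have hhval : ∀ z, h z = Real.exp (dotd lamStar (φ z)) / I := by
    intro z; simp only [hhdef]; rw [Real.exp_sub, hexpLam]
  have hhm : Measurable h := (hdotm.sub_const _).exp
  have hh0 : ∀ z, 0 < h z := fun z => Real.exp_pos _
  have hhi : Integrable h phat := by
    have : h = fun z => Real.exp (dotd lamStar (φ z)) / I := funext hhval
    rw [this]; exact hexpi.div_const I
  have hh1 : ∫ z, h z ∂phat = 1 := by
    rw [show ∫ z, h z ∂phat = ∫ z, Real.exp (dotd lamStar (φ z)) / I ∂phat from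
      integral_congr_ae (ae_of_all _ hhval), integral_div, ← hI, div_self hIpos.ne']
  have hlogh : ∀ z, Real.log (h z) = dotd lamStar (φ z) - LamZ phat φ lamStar :=
    fun z => Real.log_exp _
  -- density facts
  have hgm : Measurable g := (Measure.measurable_rnDeriv p phat).ennreal_toReal
  have hg0 : ∀ z, 0 ≤ g z := fun z => ENNReal.toReal_nonneg
  have hgi : Integrable g phat := Measure.integrable_toReal_rnDeriv
  have hg1 : ∫ z, g z ∂phat = 1 := by
    rw [hgdef, Measure.integral_toReal_rnDeriv hac]
    simp
  -- integrability over p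
  have hdoti : Integrable (fun z => dotd lamStar (φ z)) p := by
    apply Integrable.mono' (integrable_const M) hdotm.aestronglyMeasurable
    exact ae_of_all _ fun z => hdotb z
  have hloghi : Integrable (fun z => Real.log (h z)) p := by
    have : (fun z => Real.log (h z)) =
        fun z => dotd lamStar (φ z) - LamZ phat φ lamStar := funext hlogh
    rw [this]
    exact hdoti.sub (integrable_const _)
  have hlogg : Integrable (fun z => Real.log (g z)) p := hKLfin
  have hfp : Integrable (fun z => Real.log (g z) - Real.log (h z)) p := hlogg.sub hloghi
  have hKi : Integrable (fun z => g z * (Real.log (g z) - Real.log (h z))) phat := by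
    have h2 := (integrable_rnDeriv_smul_iff hac
      (f := fun z => Real.log (g z) - Real.log (h z))).mpr hfp
    exact h2.congr (ae_of_all _ fun z => by simp [smul_eq_mul, hgdef])
  -- value of K
  have hKtrans : ∫ z, g z * (Real.log (g z) - Real.log (h z)) ∂phat =
      ∫ z, (Real.log (g z) - Real.log (h z)) ∂p := by
    rw [← integral_rnDeriv_smul hac
      (f := fun z => Real.log (g z) - Real.log (h z))]
    simp [smul_eq_mul, hgdef]
  set c : Fin d → ℝ := fun i => ∫ z, φ z i ∂p with hc
  have hφip : ∀ i, Integrable (fun z => φ z i) p := by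
    intro i
    apply Integrable.mono' (integrable_const C) (hφim i).aestronglyMeasurable
    exact ae_of_all _ fun z => hφb z i
  have hAval : ∫ z, dotd lamStar (φ z) ∂p = ∑ i, lamStar i * c i := by
    unfold dotd
    rw [integral_finset_sum _ fun i _ => (hφip i).const_mul _]
    simp [integral_const_mul, hc]
  have hKval : ∫ z, g z * (Real.log (g z) - Real.log (h z)) ∂phat =
      KLm p phat - ∑ i, lamStar i * c i + LamZ phat φ lamStar := by
    rw [hKtrans, integral_sub hlogg hloghi]
    have : ∫ z, Real.log (h z) ∂p =
        ∑ i, lamStar i * c i - LamZ phat φ lamStar := by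
      rw [show (fun z => Real.log (h z)) =
          fun z => dotd lamStar (φ z) - LamZ phat φ lamStar from funext hlogh,
        integral_sub hdoti (integrable_const _), hAval]
      simp
    rw [this]
    rw [KLm]
    ring
  -- KL nonneg
  have hglogi : Integrable (fun z => g z * Real.log (g z)) phat := by
    have h2 := (integrable_rnDeriv_smul_iff hac
      (f := fun z => Real.log (g z))).mpr hlogg
    exact h2.congr (ae_of_all _ fun z => by simp [smul_eq_mul, hgdef])
  have hKL1nn : 0 ≤ KLm p phat := by
    have ht : KLm p phat = ∫ z, g z * Real.log (g z) ∂phat := by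
      rw [KLm, ← integral_rnDeriv_smul hac (f := fun z => Real.log (g z))]
      simp [smul_eq_mul, hgdef]
    have hmono : ∫ z, (g z - 1) ∂phat ≤ ∫ z, g z * Real.log (g z) ∂phat :=
      integral_mono (hgi.sub (integrable_const 1)) hglogi (fun z => xlogx_ge (hg0 z))
    have hzero : ∫ z, (g z - 1) ∂phat = 0 := by
      rw [integral_sub hgi (integrable_const 1), hg1]
      simp
    rw [ht]
    linarith
  -- optimality
  have hopt : 0 ≤ dotd lamStar b - LamZ phat φ lamStar -
      (β ^ 2 / 4) * ∑ i, (lamStar i) ^ 2 := by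
    have h0 := hmax 0
    have hD0 : Dreg phat φ β b 0 = 0 := by
      simp [Dreg, LamZ, dotd]
    rw [hD0] at h0
    exact h0
  set S := ∑ i, (lamStar i) ^ 2 with hS
  set Esq := ∑ i, (c i - b i) ^ 2 with hEsq
  have hSnn : 0 ≤ S := Finset.sum_nonneg fun i _ => sq_nonneg _
  have hEnn : 0 ≤ Esq := Finset.sum_nonneg fun i _ => sq_nonneg _
  set T := ∑ i, lamStar i * (b i - c i) with hT
  have hT2 : T ^ 2 ≤ S * Esq := by
    have := Finset.sum_mul_sq_le_sq_mul_sq Finset.univ lamStar (fun i => b i - c i)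
    calc T ^ 2 ≤ (∑ i, (lamStar i)^2) * ∑ i, (b i - c i)^2 := this
    _ = S * Esq := by
        rw [hS, hEsq]
        congr 1
        exact Finset.sum_congr rfl fun i _ => by ring
  have hTs : T ≤ Real.sqrt S * Real.sqrt Esq := by
    rcases le_or_gt T 0 with hT0 | hT0
    · exact hT0.trans (mul_nonneg (Real.sqrt_nonneg _) (Real.sqrt_nonneg _))
    · rw [← Real.sqrt_mul hSnn]
      exact (Real.le_sqrt hT0.le (mul_nonneg hSnn hEnn)).mpr hT2
  have hTle : T ≤ β^2/4 * S + Esq / β^2 := by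
    have hs := Real.sq_sqrt hSnn
    have he := Real.sq_sqrt hEnn
    have key : β^2/4 * S + Esq / β^2 - Real.sqrt S * Real.sqrt Esq =
        (β^2 * Real.sqrt S - 2 * Real.sqrt Esq)^2 / (4 * β^2) := by
      field_simp
      linear_combination (-(β^4))*hs + (-4)*he
    have hposq : 0 ≤ (β^2 * Real.sqrt S - 2 * Real.sqrt Esq)^2 / (4 * β^2) := by positivity
    linarith [hTs]
  have hKle : ∫ z, g z * (Real.log (g z) - Real.log (h z)) ∂phat ≤
      KLm p phat + Esq / β^2 := by
    rw [hKval]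
    have hTeq : T = dotd lamStar b - ∑ i, lamStar i * c i := by
      rw [hT]
      unfold dotd
      rw [← Finset.sum_sub_distrib]
      exact Finset.sum_congr rfl fun i _ => by ring
    linarith [hTle, hopt]
  have hpin := pinsker phat g h hgm hhm hg0 hh0 hgi hhi hg1 hh1 hKi
  have hsqrt2 : Real.sqrt 2 ≤ 2 := by
    nlinarith [Real.sq_sqrt (show (0:ℝ) ≤ 2 by norm_num), Real.sqrt_nonneg 2]
  calc ∫ z, |g z - Real.exp (dotd lamStar (φ z) - LamZ phat φ lamStar)| ∂phat
      = ∫ z, |g z - h z| ∂phat := rfl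
  _ ≤ Real.sqrt (2 * ∫ z, g z * (Real.log (g z) - Real.log (h z)) ∂phat) := hpin
  _ ≤ Real.sqrt (2 * KLm p phat + 2 * (Esq / β^2)) := Real.sqrt_le_sqrt (by linarith)
  _ ≤ Real.sqrt (2 * KLm p phat) + Real.sqrt (2 * (Esq / β^2)) :=
      sqrt_add_le' (by linarith) (by positivity)
  _ = Real.sqrt 2 * Real.sqrt (KLm p phat) + Real.sqrt 2 * (Real.sqrt Esq / β) := by
      rw [Real.sqrt_mul (by norm_num : (0:ℝ) ≤ 2), Real.sqrt_mul (by norm_num : (0:ℝ) ≤ 2),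
        Real.sqrt_div hEnn, Real.sqrt_sq hβ.le]
  _ ≤ Real.sqrt 2 * Real.sqrt (KLm p phat) + (2 / β) * Real.sqrt Esq := by
      have h1 : Real.sqrt 2 * (Real.sqrt Esq / β) ≤ 2 * (Real.sqrt Esq / β) :=
        mul_le_mul_of_nonneg_right hsqrt2 (by positivity)
      have h2 : 2 * (Real.sqrt Esq / β) = (2 / β) * Real.sqrt Esq := by ring
      linarith
  _ = Real.sqrt 2 * Real.sqrt (KLm p phat) +
      (2 / β) * Real.sqrt (∑ i, ((∫ z, φ z i ∂p) - b i) ^ 2) := rfl
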